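/- If π1 ≤ π2 in the refinement order on noncrossing partitions of {1,…,n}, then T_{π1} ≤ T_{π2} in the Tamari lattice Tam_n. -/

import Mathlib

/-- Planar binary trees. -/
inductive BT : Type
  | leaf : BT
  | node : BT → BT → BT
deriving DecidableEq

namespace BT

/-- Number of internal vertices. -/
def size : BT → ℕ
  | leaf => 0
  | node l r => l.size + r.size + 1

/-- One left rotation somewhere in the tree (covering relation of the Tamari lattice). -/
inductive Rot : BT → BT → Prop
  | root (a b c : BT) : Rot (node (node a b) c) (node a (node b c))
  | left {l l' : BT} (r : BT) : Rot l l' → Rot (node l r) (node l' r)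
  | right (l : BT) {r r' : BT} : Rot r r' → Rot (node l r) (node l r')

/-- The Tamari order: reflexive transitive closure of left rotations. -/
def tamariLE (S T : BT) : Prop := Relation.ReflTransGen Rot S T

/-- The partial order induced by a binary tree on `{1,…,size}` via in-order labelling:
`rel T i j` iff the vertex labelled `i` lies in the subtree rooted at the vertex labelled `j`. -/
def rel : BT → ℕ → ℕ → Prop
  | leaf, _, _ => False
  | node l r, i, j =>
      (j = l.size + 1 ∧ 1 ≤ i ∧ i ≤ l.size + r.size + 1) ∨
      rel l i j ∨
      (∃ i' j', rel r i' j' ∧ i = i' + l.size + 1 ∧ j = j' + l.size + 1)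

/-- Decreasing relations of a tree: pairs `(c, a)` with `a < c` and `c ◁ a`. -/
def Dec (T : BT) : Set (ℕ × ℕ) := {p | p.2 < p.1 ∧ T.rel p.1 p.2}

/-- Increasing relations of a tree: pairs `(a, c)` with `a < c` and `a ◁ c`. -/
def Inc (T : BT) : Set (ℕ × ℕ) := {p | p.1 < p.2 ∧ T.rel p.1 p.2}

/-- Left/right mirror image of a planar binary tree. -/
def mirror : BT → BT
  | leaf => leaf
  | node l r => node r.mirror l.mirror

/-- In-order label of the root (0 for the empty tree). -/
def rootLabel : BT → ℕ
  | leaf => 0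
  | node l _ => l.size + 1

/-- `rcRel T i j` iff, under in-order labelling, the vertex `j` is the right child of vertex `i`. -/
def rcRel : BT → ℕ → ℕ → Prop
  | leaf, _, _ => False
  | node l r, i, j =>
      (i = l.size + 1 ∧ r ≠ leaf ∧ j = l.size + 1 + r.rootLabel) ∨
      rcRel l i j ∨
      (∃ i' j', rcRel r i' j' ∧ i = i' + l.size + 1 ∧ j = j' + l.size + 1)

/-- `graft T i S` grafts the root of `S` on the `i`-th leaf of `T` (leaves numbered 1,…,size+1
from left to right). -/
def graft : BT → ℕ → BT → BT
  | leaf, _, S => S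
  | node l r, i, S =>
      if i ≤ l.size + 1 then node (l.graft i S) r
      else node l (r.graft (i - (l.size + 1)) S)

end BT

/-- An interval-poset of size `n`: a partial order on `{1,…,n}` (encoded as a relation on `ℕ`
supported and reflexive on `{1,…,n}`) satisfying the two interval-poset conditions. -/
def IsIntervalPoset (n : ℕ) (r : ℕ → ℕ → Prop) : Prop :=
  (∀ a b, r a b → 1 ≤ a ∧ a ≤ n ∧ 1 ≤ b ∧ b ≤ n) ∧
  (∀ a, 1 ≤ a → a ≤ n → r a a) ∧
  (∀ a b c, r a b → r b c → r a c) ∧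
  (∀ a b, r a b → r b a → a = b) ∧
  (∀ a b c, a < b → b < c → r a c → r b c) ∧
  (∀ a b c, a < b → b < c → r c a → r c b)

/-- The Châtel–Pons interval-poset of an interval `[S,T]`: reflexivity together with the
decreasing relations of `S` and the increasing relations of `T`. -/
def ipOf (S T : BT) : ℕ → ℕ → Prop := fun a b =>
  (a = b ∧ 1 ≤ a ∧ a ≤ S.size) ∨ (b < a ∧ S.rel a b) ∨ (a < b ∧ T.rel a b)

/-- `HasseCov r a b`: the relation `a ◁ b` is a cover relation (an edge `a → b` of the
Hasse diagram) of the poset `r`. -/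
def HasseCov (r : ℕ → ℕ → Prop) (a b : ℕ) : Prop :=
  r a b ∧ a ≠ b ∧ ∀ c, r a c → r c b → c = a ∨ c = b

/-- An exceptional interval-poset: the Hasse diagram contains no configuration
`y → x`, `y → z` with `x < y < z`. -/
def IsExceptional (n : ℕ) (r : ℕ → ℕ → Prop) : Prop :=
  IsIntervalPoset n r ∧
  ¬∃ x y z, x < y ∧ y < z ∧ HasseCov r y x ∧ HasseCov r y z

/-- A noncrossing tree in the based regular `(n+1)`-gon, with vertices `0,…,n`:
a spanning tree whose edges pairwise do not cross. Boundary edge `i` (for `1 ≤ i ≤ n`)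
joins vertices `i-1` and `i`; the base joins vertices `0` and `n`. -/
def IsNCTree (n : ℕ) (G : SimpleGraph (Fin (n + 1))) : Prop :=
  G.IsTree ∧
  ∀ a b c d : Fin (n + 1), G.Adj a b → G.Adj c d →
    ¬((a : ℕ) < c ∧ (c : ℕ) < b ∧ (b : ℕ) < d)

/-- Adjacency in a graph on `Fin (n+1)`, read on natural numbers. -/
def adjN (n : ℕ) (G : SimpleGraph (Fin (n + 1))) (a b : ℕ) : Prop :=
  ∃ (ha : a < n + 1) (hb : b < n + 1), G.Adj ⟨a, ha⟩ ⟨b, hb⟩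

/-- `EdgeLabel n G a b i`: the edge of the noncrossing tree `G` joining vertices `a < b`
carries the label `i`, i.e. it separates boundary edge `i` from the base and `i` is either
the edge itself (boundary case) or an open boundary edge. -/
def EdgeLabel (n : ℕ) (G : SimpleGraph (Fin (n + 1))) (a b i : ℕ) : Prop :=
  a < b ∧ b ≤ n ∧ adjN n G a b ∧ a < i ∧ i ≤ b ∧ (b = a + 1 ∨ ¬adjN n G (i - 1) i)

/-- The relation `◁_T` induced by a noncrossing tree: `i ◁ j` iff the edge labelled `i`
is separated from the base by the edge labelled `j` (plus reflexivity on `{1,…,n}`). -/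
def ncRel (n : ℕ) (G : SimpleGraph (Fin (n + 1))) : ℕ → ℕ → Prop := fun i j =>
  (i = j ∧ 1 ≤ i ∧ i ≤ n) ∨
  ∃ a b c d, EdgeLabel n G a b i ∧ EdgeLabel n G c d j ∧ c ≤ a ∧ b ≤ d ∧ ¬(a = c ∧ b = d)

/-- The graph `T_P` associated to an interval-poset `P`: for each `v`, an edge from the left
side of `min {x | x ◁ v}` (vertex `min − 1`) to the right side of `max {x | x ◁ v}`. -/
noncomputable def graphOf (n : ℕ) (r : ℕ → ℕ → Prop) : SimpleGraph (Fin (n + 1)) :=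
  SimpleGraph.fromRel (fun a b =>
    ∃ v, 1 ≤ v ∧ v ≤ n ∧ (a : ℕ) + 1 = sInf {x | r x v} ∧ (b : ℕ) = sSup {x | r x v})

/-- The partition `π_T` of a binary tree, as an equivalence-type relation: the finest
partition in which every vertex and its right child lie in the same block. -/
def sameBlock (T : BT) : ℕ → ℕ → Prop :=
  Relation.EqvGen (fun a b => T.rcRel a b ∨ T.rcRel b a)

/-- A relation (thought of as "same block of a partition") is noncrossing. -/
def IsNoncrossingRel (r : ℕ → ℕ → Prop) : Prop :=
  ¬∃ i j k l, i < j ∧ j < k ∧ k < l ∧ r i k ∧ r j l ∧ ¬r i j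

/-- The partition `π_T` of `{1,…,n}` associated to a binary tree, restricted to its support. -/
def partOf (T : BT) : ℕ → ℕ → Prop := fun a b =>
  sameBlock T a b ∧ 1 ≤ a ∧ a ≤ T.size ∧ 1 ≤ b ∧ b ≤ T.size

/-- A noncrossing partition of `{1,…,n}`, encoded as its "same block" equivalence relation. -/
def NCPartition (n : ℕ) (r : ℕ → ℕ → Prop) : Prop :=
  (∀ a b, r a b → 1 ≤ a ∧ a ≤ n ∧ 1 ≤ b ∧ b ≤ n) ∧
  (∀ a, 1 ≤ a → a ≤ n → r a a) ∧
  (∀ a b, r a b → r b a) ∧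
  (∀ a b c, r a b → r b c → r a c) ∧
  IsNoncrossingRel r

/-- `SubtreeAt S i j A`: `A` is a (nonempty) subtree of `S` rooted at an internal vertex,
whose leaves are the leaves `i,…,j` of `S`. -/
def SubtreeAt : BT → ℕ → ℕ → BT → Prop
  | .leaf, _, _, _ => False
  | .node l r, i, j, A =>
      (A = .node l r ∧ i = 1 ∧ j = (BT.node l r).size + 1) ∨
      SubtreeAt l i j A ∨
      (∃ i' j', SubtreeAt r i' j' A ∧ i = i' + l.size + 1 ∧ j = j' + l.size + 1)

/-- A new interval of `Tam n`: an interval that cannot be obtained as the grafting of two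
intervals of smaller sizes. -/
def IsNewInterval (n : ℕ) (S T : BT) : Prop :=
  S.size = n ∧ T.size = n ∧ BT.tamariLE S T ∧
  ¬∃ (S1 T1 S2 T2 : BT) (i : ℕ),
      S1.size = T1.size ∧ S2.size = T2.size ∧ S1.size < n ∧ S2.size < n ∧
      BT.tamariLE S1 T1 ∧ BT.tamariLE S2 T2 ∧ 1 ≤ i ∧ i ≤ S1.size + 1 ∧
      S = S1.graft i S2 ∧ T = T1.graft i T2

/-- The rise of a relation of size `n`: keep the decreasing relations, shift the increasing
relations by `+1`, on the ground set `{1,…,n+1}`. -/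
def riseRel (n : ℕ) (r : ℕ → ℕ → Prop) : ℕ → ℕ → Prop := fun a b =>
  (a = b ∧ 1 ≤ a ∧ a ≤ n + 1) ∨ (b < a ∧ r a b) ∨ (a < b ∧ 2 ≤ a ∧ r (a - 1) (b - 1))

/-- A relation is modern: no configuration `x ◁ y` and `z ◁ y` with `x < y < z`. -/
def ModernRel (r : ℕ → ℕ → Prop) : Prop :=
  ¬∃ x y z, x < y ∧ y < z ∧ r x y ∧ r z y

/-- A new interval-poset of size `m`: no increasing relation starting at `1`, no decreasing
relation starting at `m`, and no pair of relations `i+1 ◁ j+1` and `j ◁ i` with `i < j`. -/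
def NewIP (m : ℕ) (r : ℕ → ℕ → Prop) : Prop :=
  IsIntervalPoset m r ∧
  (¬∃ y, 1 < y ∧ r 1 y) ∧
  (¬∃ x, x < m ∧ r m x) ∧
  ¬∃ i j, i < j ∧ r (i + 1) (j + 1) ∧ r j i

/-- The fall of a relation of size `m`: keep the decreasing relations, shift the increasing
relations by `−1`, on the ground set `{1,…,m−1}`. -/
def fallRel (m : ℕ) (r : ℕ → ℕ → Prop) : ℕ → ℕ → Prop := fun a b =>
  (a = b ∧ 1 ≤ a ∧ a ≤ m - 1) ∨ (b < a ∧ r a b) ∨ (a < b ∧ r (a + 1) (b + 1))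

/-- Iterated rise: `riseIter n r k` is the `k`-th rise of a relation of size `n`. -/
def riseIter (n : ℕ) (r : ℕ → ℕ → Prop) : ℕ → (ℕ → ℕ → Prop)
  | 0 => r
  | k + 1 => riseRel (n + k) (riseIter n r k)

/-- An infinitely modern relation: no configuration `w ◁ x` and `z ◁ y` with `w < x < y < z`. -/
def InfModernRel (r : ℕ → ℕ → Prop) : Prop :=
  ¬∃ w x y z, w < x ∧ x < y ∧ y < z ∧ r w x ∧ r z y

open Classical in
/-- `irStat n r`: the smallest `k` with an increasing relation `k ◁ k+1`, and `n` if none. -/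
noncomputable def irStat (n : ℕ) (r : ℕ → ℕ → Prop) : ℕ :=
  if ∃ k, r k (k + 1) then sInf {k | r k (k + 1)} else n

open Classical in
/-- `drStat n r`: the largest `i` with a decreasing relation `i ◁ i−1`, and `1` if none. -/
noncomputable def drStat (n : ℕ) (r : ℕ → ℕ → Prop) : ℕ :=
  if ∃ i, 2 ≤ i ∧ r i (i - 1) then sSup {i | 2 ≤ i ∧ r i (i - 1)} else 1
namespace BT

/-- Right end of the interval of in-order labels of the subtree rooted at vertex `i`. -/
def rend : BT → ℕ → ℕ
  | .leaf, _ => 0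
  | .node l r, i =>
      if i ≤ l.size then rend l i
      else if i = l.size + 1 then l.size + r.size + 1
      else rend r (i - (l.size + 1)) + (l.size + 1)

lemma le_rend : ∀ (T : BT) (i : ℕ), 1 ≤ i → i ≤ T.size → i ≤ rend T i := by
  intro T
  induction T with
  | leaf => intro i h1 h2; simp [size] at h2; omega
  | node l r ihl ihr =>
    intro i h1 h2
    simp only [size] at h2
    simp only [rend]
    by_cases hl : i ≤ l.size
    · simpa [hl] using ihl i h1 hl
    · by_cases he : i = l.size + 1
      · rw [if_neg hl, if_pos he]; omega
      · have h3 : 1 ≤ i - (l.size + 1) := by omega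
        have h4 : i - (l.size + 1) ≤ r.size := by omega
        have := ihr _ h3 h4
        rw [if_neg hl, if_neg he]; omega

lemma rend_le : ∀ (T : BT) (i : ℕ), 1 ≤ i → i ≤ T.size → rend T i ≤ T.size := by
  intro T
  induction T with
  | leaf => intro i h1 h2; simp [size] at h2; omega
  | node l r ihl ihr =>
    intro i h1 h2
    simp only [size] at h2 ⊢
    simp only [rend]
    by_cases hl : i ≤ l.size
    · have := ihl i h1 hl; simp [hl]; omega
    · by_cases he : i = l.size + 1
      · simp [hl, he]
      · have h3 : 1 ≤ i - (l.size + 1) := by omega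
        have h4 : i - (l.size + 1) ≤ r.size := by omega
        have := ihr _ h3 h4
        simp [hl, he]; omega

/-- Nesting of subtree intervals. -/
lemma rend_nest : ∀ (T : BT) (i j : ℕ), 1 ≤ i → i ≤ T.size → i ≤ j → j ≤ rend T i →
    rend T j ≤ rend T i := by
  intro T
  induction T with
  | leaf => intro i j h1 h2; simp [size] at h2; omega
  | node l r ihl ihr =>
    intro i j h1 h2 hij hj
    simp only [size] at h2
    simp only [rend] at hj ⊢
    by_cases hl : i ≤ l.size
    · simp only [hl, if_true] at hj
      have hri := rend_le l i h1 hl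
      have hjl : j ≤ l.size := le_trans hj hri
      simp only [hl, hjl, if_true]
      exact ihl i j h1 hl hij hj
    · by_cases he : i = l.size + 1
      · simp only [hl, he, if_true, if_neg hl]
        have hjn : j ≤ l.size + r.size + 1 := by
          simpa [hl, he] using hj
        by_cases hjl : j ≤ l.size
        · have := rend_le l j (by omega) hjl; simp [hjl]; omega
        · by_cases hje : j = l.size + 1
          · simp [hjl, hje]
          · have := rend_le r (j - (l.size + 1)) (by omega) (by omega)
            simp [hjl, hje]; omega
      · have hjl : ¬ j ≤ l.size := by omega
        have hje : ¬ j = l.size + 1 := by omega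
        simp only [hl, he, if_false, hjl, hje] at hj ⊢
        have := ihr (i - (l.size + 1)) (j - (l.size + 1)) (by omega) (by omega)
          (by omega) (by omega)
        omega

lemma size_eq_zero : ∀ {T : BT}, T.size = 0 → T = leaf := by
  intro T h
  cases T with
  | leaf => rfl
  | node l r => simp [size] at h

/-- The bracket vector determines the tree. -/
lemma rend_inj : ∀ (S T : BT), S.size = T.size →
    (∀ i, 1 ≤ i → i ≤ S.size → rend S i = rend T i) → S = T := by
  intro S
  induction S with
  | leaf =>
    intro T hs _; exact (size_eq_zero hs.symm).symm
  | node lS rS ihl ihr =>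
    intro T hs hv
    cases T with
    | leaf => simp [size] at hs
    | node lT rT =>
      simp only [size] at hs
      have hll : lS.size = lT.size := by
        by_contra hne
        rcases Nat.lt_or_ge lS.size lT.size with hlt | hge
        · have h1 : rend (node lS rS) (lS.size + 1) = lS.size + rS.size + 1 := by
            simp [rend]
          have h2 : rend (node lT rT) (lS.size + 1) = rend lT (lS.size + 1) := by
            simp [rend, Nat.succ_le_of_lt hlt]
          have h3 := rend_le lT (lS.size + 1) (by omega) (by omega)
          have h4 := hv (lS.size + 1) (by omega) (by simp only [size]; omega)
          omega
        · have hlt : lT.size < lS.size := by omega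
          have h1 : rend (node lS rS) (lT.size + 1) = rend lS (lT.size + 1) := by
            simp [rend, Nat.succ_le_of_lt hlt]
          have h2 : rend (node lT rT) (lT.size + 1) = lT.size + rT.size + 1 := by
            simp [rend]
          have h3 := rend_le lS (lT.size + 1) (by omega) (by omega)
          have h4 := hv (lT.size + 1) (by omega) (by simp only [size]; omega)
          omega
      have hrr : rS.size = rT.size := by omega
      have el : lS = lT := by
        apply ihl lT hll
        intro i h1 h2
        have := hv i h1 (by simp only [size]; omega)
        have h2' : i ≤ lT.size := hll ▸ h2
        simp only [rend, if_pos h2, if_pos h2'] at this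
        exact this
      have er : rS = rT := by
        apply ihr rT hrr
        intro i h1 h2
        have := hv (i + lS.size + 1) (by omega) (by simp only [size]; omega)
        have hc1 : ¬ i + lS.size + 1 ≤ lS.size := by omega
        have hc2 : ¬ i + lS.size + 1 = lS.size + 1 := by omega
        have hc1' : ¬ i + lS.size + 1 ≤ lT.size := by omega
        have hc2' : ¬ i + lS.size + 1 = lT.size + 1 := by omega
        simp only [rend, hc1, hc2, hc1', hc2', if_false] at this
        have hi1 : i + lS.size + 1 - (lS.size + 1) = i := by omega
        have hi2 : i + lS.size + 1 - (lT.size + 1) = i := by omega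
        rw [hi1, hi2] at this
        omega
      rw [el, er]

lemma rot_size : ∀ {S S' : BT}, Rot S S' → S.size = S'.size := by
  intro S S' h
  induction h with
  | root a b c => simp [size]; omega
  | left r _ ih => simp [size]; omega
  | right l _ ih => simp [size]; omega

lemma rend_left {l r : BT} {i : ℕ} (h : i ≤ l.size) : rend (node l r) i = rend l i := by
  simp [rend, h]

lemma rend_root {l r : BT} {i : ℕ} (h : i = l.size + 1) :
    rend (node l r) i = l.size + r.size + 1 := by
  have h2 : ¬ i ≤ l.size := by omega
  simp only [rend, if_neg h2, if_pos h]

lemma rend_right {l r : BT} {i : ℕ} (h : l.size + 1 < i) :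
    rend (node l r) i = rend r (i - (l.size + 1)) + (l.size + 1) := by
  have h2 : ¬ i ≤ l.size := by omega
  have h3 : ¬ i = l.size + 1 := by omega
  simp only [rend, if_neg h2, if_neg h3]

lemma rot_step : ∀ (S : BT) (i : ℕ), 1 ≤ i → i ≤ S.size → rend S i < S.size →
    (∀ q, 1 ≤ q → q < i → rend S q ≠ rend S i) →
    ∃ S', Rot S S' ∧
      ∀ j, 1 ≤ j → j ≤ S.size →
        rend S' j = if j = i then rend S (rend S i + 1) else rend S j := by
  intro S
  induction S with
  | leaf => intro i h1 h2; simp only [size] at h2; omega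
  | node l r ihl ihr =>
    intro i h1 h2 h3 h4
    simp only [size] at h2 h3
    by_cases hl : i ≤ l.size
    · have hrSi : rend (node l r) i = rend l i := rend_left hl
      by_cases hsub : rend l i < l.size
      · -- rotate inside l
        obtain ⟨l', hrot, hval⟩ := ihl i h1 hl hsub (by
          intro q hq1 hq2
          have hql : q ≤ l.size := by omega
          have := h4 q hq1 hq2
          rwa [rend_left hql, rend_left hl] at this)
        refine ⟨node l' r, Rot.left r hrot, ?_⟩
        have hsz : l'.size = l.size := (rot_size hrot).symm
        intro j hj1 hj2
        simp only [size] at hj2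
        by_cases hjl : j ≤ l.size
        · rw [rend_left (hsz ▸ hjl : j ≤ l'.size), hval j hj1 hjl, hrSi]
          by_cases hji : j = i
          · rw [if_pos hji, if_pos hji,
              rend_left (show rend l i + 1 ≤ l.size by omega)]
          · rw [if_neg hji, if_neg hji, rend_left hjl]
        · have hji : j ≠ i := by omega
          rw [if_neg hji]
          by_cases hje : j = l.size + 1
          · rw [rend_root (show j = l'.size + 1 by omega), rend_root hje, hsz]
          · rw [rend_right (show l'.size + 1 < j by omega),
              rend_right (show l.size + 1 < j by omega), hsz]
      · -- i is the root of l; rotate at the root of S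
        have hle := rend_le l i h1 hl
        have hre : rend l i = l.size := by omega
        obtain ⟨l1, l2, rfl⟩ : ∃ l1 l2, l = node l1 l2 := by
          cases l with
          | leaf => exfalso; simp only [size] at hl; omega
          | node a b => exact ⟨a, b, rfl⟩
        simp only [size] at hre hle hl h2 h3 ⊢
        have hieq : i = l1.size + 1 := by
          rcases Nat.lt_trichotomy i (l1.size + 1) with hlt | heq | hgt
          · exfalso
            have hia : i ≤ l1.size := by omega
            have e := rend_left (l := l1) (r := l2) hia
            have := rend_le l1 i h1 hia
            omega
          · exact heq
          · exfalso
            refine h4 (l1.size + 1) (by omega) hgt ?_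
            rw [rend_left (show l1.size + 1 ≤ (node l1 l2).size by
                  simp only [size]; omega),
              rend_root rfl, hrSi, hre]
        refine ⟨node l1 (node l2 r), Rot.root l1 l2 r, ?_⟩
        intro j hj1 hj2
        have hSi : rend (node (node l1 l2) r) i = l1.size + l2.size + 1 := by
          rw [hrSi, hre]
        rw [hSi]
        have htarget : rend (node (node l1 l2) r) (l1.size + l2.size + 1 + 1)
            = l1.size + l2.size + r.size + 2 := by
          rw [rend_root (show l1.size + l2.size + 1 + 1 = (node l1 l2).size + 1 by
            simp only [size])]
          simp only [size]; omega
        by_cases hja : j ≤ l1.size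
        · have hji : j ≠ i := by omega
          rw [if_neg hji, rend_left hja,
            rend_left (show j ≤ (node l1 l2).size by simp only [size]; omega),
            rend_left hja]
        · by_cases hji : j = i
          · rw [if_pos hji, htarget, hji, hieq,
              rend_root (show l1.size + 1 = l1.size + 1 from rfl)]
            simp only [size]; omega
          · have hja1 : l1.size + 1 < j := by omega
            rw [if_neg hji, rend_right hja1]
            by_cases hjin : j ≤ l1.size + l2.size + 1
            · rw [rend_left (show j - (l1.size + 1) ≤ l2.size by omega),
                rend_left (show j ≤ (node l1 l2).size by simp only [size]; omega),
                rend_right hja1]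
            · by_cases hjroot : j = l1.size + l2.size + 2
              · rw [rend_root (show j - (l1.size + 1) = l2.size + 1 by omega),
                  rend_root (show j = (node l1 l2).size + 1 by simp only [size]; omega)]
                simp only [size]; omega
              · rw [rend_right (show l2.size + 1 < j - (l1.size + 1) by omega),
                  rend_right (show (node l1 l2).size + 1 < j by simp only [size]; omega)]
                simp only [size]
                have : j - (l1.size + 1) - (l2.size + 1) = j - (l1.size + l2.size + 1 + 1) := by
                  omega
                rw [this]; omega
    · by_cases hie : i = l.size + 1
      · exfalso
        have := rend_root (l := l) (r := r) hie
        omega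
      · -- rotate inside r
        have hil : l.size + 1 < i := by omega
        have hi1 : 1 ≤ i - (l.size + 1) := by omega
        have hi2 : i - (l.size + 1) ≤ r.size := by omega
        have hrSi : rend (node l r) i = rend r (i - (l.size + 1)) + (l.size + 1) :=
          rend_right hil
        have hi3 : rend r (i - (l.size + 1)) < r.size := by omega
        obtain ⟨r', hrot, hval⟩ := ihr _ hi1 hi2 hi3 (by
          intro q hq1 hq2
          have := h4 (q + (l.size + 1)) (by omega) (by omega)
          rw [rend_right (show l.size + 1 < q + (l.size + 1) by omega), hrSi] at this
          have hq : q + (l.size + 1) - (l.size + 1) = q := by omega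
          rw [hq] at this
          omega)
        refine ⟨node l r', Rot.right l hrot, ?_⟩
        have hsz : r'.size = r.size := (rot_size hrot).symm
        intro j hj1 hj2
        simp only [size] at hj2
        by_cases hjl : j ≤ l.size
        · have hji : j ≠ i := by omega
          rw [if_neg hji, rend_left hjl, rend_left hjl]
        · by_cases hje : j = l.size + 1
          · have hji : j ≠ i := by omega
            rw [if_neg hji, rend_root hje, rend_root hje, hsz]
          · rw [rend_right (show l.size + 1 < j by omega),
              hval _ (by omega) (by omega)]
            by_cases hji : j = i
            · rw [if_pos (show j - (l.size + 1) = i - (l.size + 1) by omega),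
                if_pos hji, hrSi]
              have hri1 := le_rend r (i - (l.size + 1)) hi1 hi2
              rw [rend_right (show l.size + 1 < rend r (i - (l.size + 1)) + (l.size + 1) + 1
                by omega)]
              have : rend r (i - (l.size + 1)) + (l.size + 1) + 1 - (l.size + 1)
                  = rend r (i - (l.size + 1)) + 1 := by omega
              rw [this]
            · rw [if_neg (show ¬ j - (l.size + 1) = i - (l.size + 1) by omega),
                if_neg hji, rend_right (show l.size + 1 < j by omega)]

lemma tamari_of_rend : ∀ (N : ℕ) (S T : BT),
    (∑ j ∈ Finset.Icc 1 T.size, (rend T j - rend S j)) ≤ N → S.size = T.size →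
    (∀ i, 1 ≤ i → i ≤ T.size → rend S i ≤ rend T i) → tamariLE S T := by
  intro N
  induction N with
  | zero =>
    intro S T hsum hsz hle
    have heq : S = T := by
      apply rend_inj S T hsz
      intro i h1 h2
      have h2' : i ≤ T.size := hsz ▸ h2
      have hz : ∑ j ∈ Finset.Icc 1 T.size, (rend T j - rend S j) = 0 :=
        Nat.le_zero.mp hsum
      have := (Finset.sum_eq_zero_iff.mp hz) i (Finset.mem_Icc.mpr ⟨h1, h2'⟩)
      have := hle i h1 h2'
      omega
    rw [heq]; exact Relation.ReflTransGen.refl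
  | succ N ih =>
    intro S T hsum hsz hle
    classical
    set D : Finset ℕ := (Finset.Icc 1 T.size).filter (fun i => rend S i < rend T i) with hDdef
    by_cases hD : D.Nonempty
    · -- pick i : minimal vertex among deficient vertices of maximal rend S value
      set M : ℕ := (D.image (fun i => rend S i)).max' (hD.image _) with hM
      have hM2 : M ∈ D.image (fun i => rend S i) := Finset.max'_mem _ _
      obtain ⟨i0, hi0D, hi0M⟩ := Finset.mem_image.mp hM2
      set D2 : Finset ℕ := D.filter (fun i => rend S i = M) with hD2def
      have hD2 : D2.Nonempty := ⟨i0, Finset.mem_filter.mpr ⟨hi0D, hi0M⟩⟩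
      set i : ℕ := D2.min' hD2 with hi
      have hiD2 : i ∈ D2 := Finset.min'_mem _ _
      have hiD : i ∈ D := (Finset.mem_filter.mp hiD2).1
      have hiM : rend S i = M := (Finset.mem_filter.mp hiD2).2
      have hiIcc := (Finset.mem_filter.mp hiD).1
      have hi1 : 1 ≤ i := (Finset.mem_Icc.mp hiIcc).1
      have hi2 : i ≤ T.size := (Finset.mem_Icc.mp hiIcc).2
      have hilt : rend S i < rend T i := (Finset.mem_filter.mp hiD).2
      have hrTle := rend_le T i hi1 hi2
      have h3 : rend S i < S.size := by omega
      have hiS : i ≤ S.size := hsz ▸ hi2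
      have hSi := le_rend S i hi1 hiS
      have h4 : ∀ q, 1 ≤ q → q < i → rend S q ≠ rend S i := by
        intro q hq1 hq2 heq
        have hqT : q ≤ T.size := by omega
        have hq3 : i ≤ rend T q := by
          have := hle q hq1 hqT
          omega
        have hq4 : rend T i ≤ rend T q := rend_nest T q i hq1 hqT (by omega) hq3
        have hqD : q ∈ D := Finset.mem_filter.mpr
          ⟨Finset.mem_Icc.mpr ⟨hq1, hqT⟩, by omega⟩
        have hqD2 : q ∈ D2 := Finset.mem_filter.mpr ⟨hqD, by omega⟩
        have := Finset.min'_le D2 q hqD2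
        omega
      obtain ⟨S', hrot, hval⟩ := rot_step S i hi1 hiS h3 h4
      have hp1 : 1 ≤ rend S i + 1 := by omega
      have hp2 : rend S i + 1 ≤ T.size := by omega
      have hpS : rend S i + 1 ≤ rend S (rend S i + 1) :=
        le_rend S _ hp1 (by omega)
      have hpT : rend S (rend S i + 1) ≤ rend T (rend S i + 1) := hle _ hp1 hp2
      have hnest : rend T (rend S i + 1) ≤ rend T i :=
        rend_nest T i (rend S i + 1) hi1 hi2 (by omega) (by omega)
      have hSi' : rend S' i = rend S (rend S i + 1) := by
        have := hval i hi1 hiS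
        rwa [if_pos rfl] at this
      have hval' : ∀ j, 1 ≤ j → j ≤ T.size → j ≠ i → rend S' j = rend S j := by
        intro j hj1 hj2 hji
        have := hval j hj1 (hsz ▸ hj2)
        rwa [if_neg hji] at this
      have hle' : ∀ j, 1 ≤ j → j ≤ T.size → rend S' j ≤ rend T j := by
        intro j hj1 hj2
        by_cases hji : j = i
        · rw [hji, hSi']; omega
        · rw [hval' j hj1 hj2 hji]; exact hle j hj1 hj2
      have hsz' : S'.size = T.size := (rot_size hrot).symm.trans hsz
      have hdec : (∑ j ∈ Finset.Icc 1 T.size, (rend T j - rend S' j))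
          < ∑ j ∈ Finset.Icc 1 T.size, (rend T j - rend S j) := by
        apply Finset.sum_lt_sum
        · intro j hj
          have hj' := Finset.mem_Icc.mp hj
          by_cases hji : j = i
          · rw [hji, hSi']; omega
          · rw [hval' j hj'.1 hj'.2 hji]
        · refine ⟨i, hiIcc, ?_⟩
          rw [hSi']
          omega
      exact Relation.ReflTransGen.head hrot (ih S' T (by omega) hsz' hle')
    · -- no deficient vertex : S = T
      have heq : S = T := by
        apply rend_inj S T hsz
        intro j h1 h2
        have h2' : j ≤ T.size := hsz ▸ h2
        have hj : j ∉ D := fun hj => hD ⟨j, hj⟩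
        rw [hDdef, Finset.mem_filter] at hj
        have := hle j h1 h2'
        have : ¬ rend S j < rend T j := fun hc =>
          hj ⟨Finset.mem_Icc.mpr ⟨h1, h2'⟩, hc⟩
        omega
      rw [heq]; exact Relation.ReflTransGen.refl

lemma rootLabel_bounds : ∀ (T : BT), T ≠ leaf → 1 ≤ rootLabel T ∧ rootLabel T ≤ T.size := by
  intro T hT
  cases T with
  | leaf => exact absurd rfl hT
  | node l r => simp only [rootLabel, size]; omega

lemma rend_rootLabel : ∀ (T : BT), T ≠ leaf → rend T (rootLabel T) = T.size := by
  intro T hT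
  cases T with
  | leaf => exact absurd rfl hT
  | node l r => rw [show rootLabel (node l r) = l.size + 1 from rfl, rend_root rfl]; rfl

lemma rcRel_bounds : ∀ (T : BT) (a b : ℕ), rcRel T a b →
    1 ≤ a ∧ a ≤ T.size ∧ 1 ≤ b ∧ b ≤ T.size := by
  intro T
  induction T with
  | leaf => intro a b h; exact absurd h not_false
  | node l r ihl ihr =>
    intro a b h
    rcases h with ⟨ha, hr, hb⟩ | h | ⟨a', b', h, ha, hb⟩
    · have := rootLabel_bounds r hr
      simp only [size]; omega
    · have := ihl a b h
      simp only [size]; omega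
    · have := ihr a' b' h
      simp only [size]; omega

lemma rcRel_rend : ∀ (T : BT) (a b : ℕ), rcRel T a b → rend T a = rend T b := by
  intro T
  induction T with
  | leaf => intro a b h; exact absurd h not_false
  | node l r ihl ihr =>
    intro a b h
    rcases h with ⟨ha, hr, hb⟩ | h | ⟨a', b', h, ha, hb⟩
    · have hrb := rootLabel_bounds r hr
      rw [rend_root ha, hb, rend_right (by omega)]
      have : l.size + 1 + rootLabel r - (l.size + 1) = rootLabel r := by omega
      rw [this, rend_rootLabel r hr]
      omega
    · have hb := rcRel_bounds l a b h
      rw [rend_left hb.2.1, rend_left hb.2.2.2, ihl a b h]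
    · have hbnd := rcRel_bounds r a' b' h
      rw [ha, hb, rend_right (by omega), rend_right (by omega)]
      have e1 : a' + l.size + 1 - (l.size + 1) = a' := by omega
      have e2 : b' + l.size + 1 - (l.size + 1) = b' := by omega
      rw [e1, e2, ihr a' b' h]

lemma reach : ∀ (T : BT) (i : ℕ), 1 ≤ i → i ≤ T.size →
    Relation.ReflTransGen T.rcRel i (rend T i) := by
  intro T
  induction T with
  | leaf => intro i h1 h2; simp only [size] at h2; omega
  | node l r ihl ihr =>
    intro i h1 h2
    simp only [size] at h2
    by_cases hl : i ≤ l.size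
    · rw [rend_left hl]
      exact Relation.ReflTransGen.mono (fun a b h => Or.inr (Or.inl h)) _ _ (ihl i h1 hl)
    · by_cases hie : i = l.size + 1
      · rw [rend_root hie]
        cases r with
        | leaf =>
          have : l.size + size leaf + 1 = i := by simp only [size]; omega
          rw [this]
        | node r1 r2 =>
          have hstep : rcRel (node l (node r1 r2)) i
              (l.size + 1 + rootLabel (node r1 r2)) :=
            Or.inl ⟨hie, by simp, rfl⟩
          have hrb := rootLabel_bounds (node r1 r2) (by simp)
          have htail : Relation.ReflTransGen (rcRel (node l (node r1 r2)))
              (rootLabel (node r1 r2) + l.size + 1)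
              (rend (node r1 r2) (rootLabel (node r1 r2)) + l.size + 1) :=
            Relation.ReflTransGen.lift (fun x => x + l.size + 1)
              (fun a b h => Or.inr (Or.inr ⟨a, b, h, rfl, rfl⟩))
              _ _ (ihr (rootLabel (node r1 r2)) hrb.1 hrb.2)
          rw [rend_rootLabel (node r1 r2) (by simp)] at htail
          have e1 : l.size + 1 + rootLabel (node r1 r2)
              = rootLabel (node r1 r2) + l.size + 1 := by omega
          have e2 : l.size + (node r1 r2).size + 1 = (node r1 r2).size + l.size + 1 := by
            omega
          rw [e2]
          exact Relation.ReflTransGen.head hstep (e1 ▸ htail)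
      · rw [rend_right (by omega)]
        have htail : Relation.ReflTransGen (rcRel (node l r))
            (i - (l.size + 1) + l.size + 1)
            (rend r (i - (l.size + 1)) + l.size + 1) :=
          Relation.ReflTransGen.lift (fun x => x + l.size + 1)
            (fun a b h => Or.inr (Or.inr ⟨a, b, h, rfl, rfl⟩))
            _ _ (ihr (i - (l.size + 1)) (by omega) (by omega))
        have e1 : i - (l.size + 1) + l.size + 1 = i := by omega
        have e2 : rend r (i - (l.size + 1)) + l.size + 1
            = rend r (i - (l.size + 1)) + (l.size + 1) := by omega
        rw [e1, e2] at htail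
        exact htail

lemma sameBlock_rend {T : BT} {a b : ℕ} (h : sameBlock T a b) : rend T a = rend T b := by
  induction h with
  | rel x y hxy =>
    rcases hxy with h | h
    · exact rcRel_rend T x y h
    · exact (rcRel_rend T y x h).symm
  | refl => rfl
  | symm x y _ ih => exact ih.symm
  | trans x y z _ _ ih1 ih2 => exact ih1.trans ih2

lemma rtg_sameBlock {T : BT} {a b : ℕ} (h : Relation.ReflTransGen T.rcRel a b) :
    sameBlock T a b := by
  induction h with
  | refl => exact Relation.EqvGen.refl a
  | tail _ hxy ih =>
    exact Relation.EqvGen.trans _ _ _ ih (Relation.EqvGen.rel _ _ (Or.inl hxy))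

end BT


/-- if `π1 ≤ π2` in the refinement order on noncrossing partitions, then
`T_{π1} ≤ T_{π2}` in the Tamari lattice. -/
theorem ncPartition_refinement_tamari (n : ℕ) (r1 r2 : ℕ → ℕ → Prop) (T1 T2 : BT)
    (h1 : NCPartition n r1) (h2 : NCPartition n r2)
    (href : ∀ a b, r1 a b → r2 a b)
    (hT1 : T1.size = n) (hT2 : T2.size = n)
    (e1 : partOf T1 = r1) (e2 : partOf T2 = r2) :
    BT.tamariLE T1 T2 := by
  have hsz : T1.size = T2.size := by rw [hT1, hT2]
  apply BT.tamari_of_rend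
    (∑ j ∈ Finset.Icc 1 T2.size, (BT.rend T2 j - BT.rend T1 j)) T1 T2 le_rfl hsz
  intro i hi1 hi2
  have hi2' : i ≤ T1.size := by omega
  have hple := BT.le_rend T1 i hi1 hi2'
  have hpge := BT.rend_le T1 i hi1 hi2'
  have hp1 : partOf T1 i (BT.rend T1 i) :=
    ⟨BT.rtg_sameBlock (BT.reach T1 i hi1 hi2'), hi1, hi2', by omega, hpge⟩
  have hr1 : r1 i (BT.rend T1 i) := e1 ▸ hp1
  have hp2 : partOf T2 i (BT.rend T1 i) := e2 ▸ href _ _ hr1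
  obtain ⟨hsb, _, _, hb1, hb2⟩ := hp2
  have he := BT.sameBlock_rend hsb
  have := BT.le_rend T2 (BT.rend T1 i) hb1 hb2
  omega
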